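/- arXiv:1305.1527 — 4 statements merged into one kernel-verified Lean document; each statement's English description precedes it below -/
import Mathlib

section
/- Let g : ℝ → ℝ be continuous and bounded, and let f_g(x) = e^{x²/2} ∫_{-∞}^x (g(y) − ∫ g dγ) e^{-y²/2} dy, where γ is the standard Gaussian measure on ℝ. Then f_g is continuously differentiable on ℝ and satisfies Stein's equation: f_g'(x) − x·f_g(x) = g(x) − ∫ g dγ for every x ∈ ℝ. -/
open MeasureTheory ProbabilityTheory Real

/-- The Stein solution associated with `g`:
`f_g(x) = e^{x²/2} ∫_{-∞}^x (g(y) − ∫ g dγ) e^{-y²/2} dy`,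
where `γ` is the standard Gaussian measure on `ℝ`. -/
noncomputable def steinSol (g : ℝ → ℝ) : ℝ → ℝ := fun x =>
  Real.exp (x ^ 2 / 2) *
    ∫ y in Set.Iic x, (g y - ∫ z, g z ∂(gaussianReal 0 1)) * Real.exp (-(y ^ 2) / 2)

/-- If `g : ℝ → ℝ` is continuous and bounded, then `f_g` is continuously differentiable
and satisfies Stein's equation `f_g'(x) − x·f_g(x) = g(x) − ∫ g dγ` for every `x`. -/
theorem stmt_0 (g : ℝ → ℝ) (hg : Continuous g) (hgb : ∃ C, ∀ x, |g x| ≤ C) :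
    ContDiff ℝ 1 (steinSol g) ∧
      ∀ x : ℝ, deriv (steinSol g) x - x * steinSol g x
        = g x - ∫ z, g z ∂(gaussianReal 0 1) := by
  obtain ⟨C, hC⟩ := hgb
  set c : ℝ := ∫ z, g z ∂(gaussianReal 0 1) with hc
  set h : ℝ → ℝ := fun y => (g y - c) * Real.exp (-(y ^ 2) / 2) with hh
  have hcont : Continuous h := (hg.sub continuous_const).mul (by fun_prop)
  have hint : Integrable h := by
    have h1 : Integrable (fun y : ℝ => Real.exp (-(1/2 : ℝ) * y ^ 2)) :=
      integrable_exp_neg_mul_sq (by norm_num)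
    refine ((h1.const_mul (C + |c|)).mono' hcont.aestronglyMeasurable ?_)
    filter_upwards with y
    have h2 : |g y - c| ≤ C + |c| := (abs_sub _ _).trans (by gcongr; exact hC y)
    have h3 : ‖h y‖ = |g y - c| * Real.exp (-(y ^ 2) / 2) := by
      rw [Real.norm_eq_abs]
      simp only [hh]
      rw [abs_mul, abs_of_pos (Real.exp_pos _)]
    rw [h3, show -(y ^ 2) / 2 = -(1/2 : ℝ) * y ^ 2 by ring]
    exact mul_le_mul_of_nonneg_right h2 (Real.exp_pos _).le
  set F : ℝ → ℝ := fun x => ∫ y in Set.Iic x, h y with hF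
  have hFeq : F = fun u => F 0 + ∫ t in (0:ℝ)..u, h t := by
    funext u
    have := intervalIntegral.integral_Iic_sub_Iic (hint.integrableOn) (hint.integrableOn)
      (a := (0:ℝ)) (b := u) (μ := volume)
    simp only [hF]
    linarith [this]
  have hFderiv : ∀ x, HasDerivAt F (h x) x := by
    intro x
    rw [hFeq]
    exact ((intervalIntegral.integral_hasDerivAt_right hint.intervalIntegrable
      hcont.stronglyMeasurable.stronglyMeasurableAtFilter
      hcont.continuousAt).const_add (F 0))
  have hexp : ∀ x : ℝ, HasDerivAt (fun x : ℝ => Real.exp (x ^ 2 / 2))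
      (x * Real.exp (x ^ 2 / 2)) x := by
    intro x
    have := (((hasDerivAt_pow 2 x).div_const 2).exp)
    convert this using 1
    ring
  have hS : ∀ x, HasDerivAt (steinSol g) (x * steinSol g x + (g x - c)) x := by
    intro x
    have := (hexp x).mul (hFderiv x)
    have heq : steinSol g = fun x => Real.exp (x ^ 2 / 2) * F x := rfl
    rw [heq]
    convert this using 1
    · rfl
    · rfl
    · rfl
    have : Real.exp (x ^ 2 / 2) * Real.exp (-(x ^ 2) / 2) = 1 := by
      rw [← Real.exp_add]; ring_nf; exact Real.exp_zero
    simp only [hh]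
    linear_combination -(g x - c) * this
  have hderiv : deriv (steinSol g) = fun x => x * steinSol g x + (g x - c) :=
    funext fun x => (hS x).deriv
  constructor
  · rw [contDiff_one_iff_deriv]
    refine ⟨fun x => (hS x).differentiableAt, ?_⟩
    rw [hderiv]
    have hScont : Continuous (steinSol g) := by
      have : Differentiable ℝ (steinSol g) := fun x => (hS x).differentiableAt
      exact this.continuous
    continuity
  · intro x
    rw [hderiv]
    ring
end

section
/- Let g : ℝ → ℝ be continuous and bounded, and let f_g(x) = e^{x²/2} ∫_{-∞}^x (g(y) − ∫ g dγ) e^{-y²/2} dy, where γ is the standard Gaussian measure on ℝ. Then for every x ∈ ℝ, |f_g(x)| ≤ √(π/2) · sup_{y ∈ ℝ} |g(y) − ∫ g dγ|. -/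
open MeasureTheory ProbabilityTheory Real

lemma aux_exp_eq : (fun y : ℝ => Real.exp (-(y ^ 2) / 2)) =
    fun y : ℝ => Real.exp (-(1 / 2 : ℝ) * y ^ 2) := by
  funext y; congr 1; ring

lemma aux_exp_integrable : Integrable (fun y : ℝ => Real.exp (-(y ^ 2) / 2)) := by
  rw [aux_exp_eq]; exact integrable_exp_neg_mul_sq (by norm_num)

lemma aux_sqrt : Real.sqrt (2 * Real.pi) / 2 = Real.sqrt (Real.pi / 2) := by
  rw [show (2 : ℝ) * Real.pi = 2 ^ 2 * (Real.pi / 2) by ring,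
    Real.sqrt_mul (by positivity), Real.sqrt_sq (by norm_num)]
  ring

lemma aux_gauss_Ioi : ∫ y in Set.Ioi (0 : ℝ), Real.exp (-(y ^ 2) / 2)
    = Real.sqrt (Real.pi / 2) := by
  rw [aux_exp_eq]
  rw [integral_gaussian_Ioi (1 / 2)]
  rw [show Real.pi / (1 / 2) = 2 * Real.pi by ring, aux_sqrt]

lemma aux_gauss_Iic : ∫ y in Set.Iic (0 : ℝ), Real.exp (-(y ^ 2) / 2)
    = Real.sqrt (Real.pi / 2) := by
  have h := integral_comp_neg_Iic (0 : ℝ) (fun y => Real.exp (-(y ^ 2) / 2))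
  simp only [neg_sq, neg_zero, neg_neg] at h
  rw [h, aux_gauss_Ioi]

lemma aux_shift_Iic (f : ℝ → ℝ) (x : ℝ) :
    ∫ y in Set.Iic x, f (y - x) = ∫ y in Set.Iic 0, f y := by
  rw [← integral_indicator measurableSet_Iic, ← integral_indicator measurableSet_Iic,
    ← integral_sub_right_eq_self (fun y => (Set.Iic (0 : ℝ)).indicator f y) x]
  congr 1
  funext y
  simp only [Set.indicator, Set.mem_Iic, sub_nonpos]

lemma aux_shift_Ioi (f : ℝ → ℝ) (x : ℝ) :
    ∫ y in Set.Ioi x, f (y - x) = ∫ y in Set.Ioi 0, f y := by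
  rw [← integral_indicator measurableSet_Ioi, ← integral_indicator measurableSet_Ioi,
    ← integral_sub_right_eq_self (fun y => (Set.Ioi (0 : ℝ)).indicator f y) x]
  congr 1
  funext y
  simp only [Set.indicator, Set.mem_Ioi, sub_pos]

lemma aux_gauss_total : ∫ y : ℝ, Real.exp (-(y ^ 2) / 2) = Real.sqrt (2 * Real.pi) := by
  rw [aux_exp_eq, integral_gaussian (1 / 2), show Real.pi / (1 / 2) = 2 * Real.pi by ring]

/-- The mean of `g` against the Gaussian as a Lebesgue integral. -/
lemma aux_mean (g : ℝ → ℝ) :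
    ∫ z, g z ∂(gaussianReal 0 1) =
      ∫ z, gaussianPDFReal 0 1 z * g z := by
  rw [gaussianReal_of_var_ne_zero _ one_ne_zero]
  have : (gaussianPDF 0 1) = fun x => (((fun z => (gaussianPDFReal 0 1 z).toNNReal) x : NNReal) : ENNReal) := by
    funext x; rfl
  rw [this, integral_withDensity_eq_integral_smul
    ((measurable_gaussianPDFReal 0 1).real_toNNReal) g]
  congr 1
  funext x
  rw [NNReal.smul_def, smul_eq_mul, Real.coe_toNNReal _ (gaussianPDFReal_nonneg 0 1 x)]

/-- For continuous bounded `g`, one has `|f_g(x)| ≤ √(π/2) · sup_y |g(y) − ∫ g dγ|`. -/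
theorem stmt_2 (g : ℝ → ℝ) (hg : Continuous g) (hgb : ∃ C, ∀ x, |g x| ≤ C) :
    ∀ x : ℝ, |steinSol g x|
      ≤ Real.sqrt (Real.pi / 2) * ⨆ y : ℝ, |g y - ∫ z, g z ∂(gaussianReal 0 1)| := by
  obtain ⟨C, hC⟩ := hgb
  set c : ℝ := ∫ z, g z ∂(gaussianReal 0 1) with hc
  set h : ℝ → ℝ := fun y => (g y - c) * Real.exp (-(y ^ 2) / 2) with hh
  set M : ℝ := ⨆ y : ℝ, |g y - c| with hM
  have hbdd : BddAbove (Set.range fun y => |g y - c|) := by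
    refine ⟨C + |c|, ?_⟩
    rintro _ ⟨y, rfl⟩
    calc |g y - c| ≤ |g y| + |c| := abs_sub _ _
    _ ≤ C + |c| := by linarith [hC y]
  have hleM : ∀ y, |g y - c| ≤ M := fun y => le_ciSup hbdd y
  have hM0 : 0 ≤ M := le_trans (abs_nonneg _) (hleM 0)
  -- integrability of h
  have hhint : Integrable h := by
    refine aux_exp_integrable.bdd_mul (c := M) ((hg.sub continuous_const).aestronglyMeasurable) ?_
    exact Filter.Eventually.of_forall (fun y => by rw [Real.norm_eq_abs]; exact hleM y)
  -- total integral of h is zero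
  have htotal : ∫ y, h y = 0 := by
    have hgint : Integrable (fun y => g y * Real.exp (-(y ^ 2) / 2)) :=
      aux_exp_integrable.bdd_mul (c := C) hg.aestronglyMeasurable
        (Filter.Eventually.of_forall (fun y => by rw [Real.norm_eq_abs]; exact hC y))
    have hsplit : ∫ y, h y = (∫ y, g y * Real.exp (-(y ^ 2) / 2))
        - c * ∫ y, Real.exp (-(y ^ 2) / 2) := by
      rw [← integral_const_mul, ← integral_sub hgint (aux_exp_integrable.const_mul c)]
      congr 1; funext y; simp [hh]; ring
    have hcval : c * Real.sqrt (2 * Real.pi) = ∫ y, g y * Real.exp (-(y ^ 2) / 2) := by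
      rw [hc, aux_mean g]
      have : ∀ z : ℝ, gaussianPDFReal 0 1 z * g z
          = (Real.sqrt (2 * Real.pi))⁻¹ * (g z * Real.exp (-(z ^ 2) / 2)) := by
        intro z
        simp only [gaussianPDFReal, NNReal.coe_one, mul_one, sub_zero]
        ring
      simp_rw [this]
      rw [integral_const_mul]
      field_simp
    rw [hsplit, aux_gauss_total, ← hcval]
    ring
  -- main bound on pieces
  have key : ∀ x : ℝ, ∀ s : Set ℝ, MeasurableSet s →
      (∀ y ∈ s, 2 * x * (x - y) ≤ 0) →
      (∫ y in s, Real.exp (-((y - x) ^ 2) / 2)) ≤ Real.sqrt (Real.pi / 2) →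
      |∫ y in s, h y| ≤ Real.exp (-(x ^ 2) / 2) * (M * Real.sqrt (Real.pi / 2)) := by
    intro x s hs hsign hsint
    have htr : Integrable (fun y : ℝ => Real.exp (-((y - x) ^ 2) / 2)) := by
      have := aux_exp_integrable.comp_sub_right x
      simpa using this
    calc |∫ y in s, h y| ≤ ∫ y in s, |h y| := by
          simpa [Real.norm_eq_abs] using
            norm_integral_le_integral_norm (μ := volume.restrict s) h
      _ ≤ ∫ y in s, M * (Real.exp (-(x ^ 2) / 2) * Real.exp (-((y - x) ^ 2) / 2)) := by
          refine setIntegral_mono_on (hhint.abs.integrableOn)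
            (((htr.const_mul _).const_mul _).integrableOn) hs ?_
          intro y hy
          rw [hh, abs_mul, abs_of_pos (Real.exp_pos _)]
          have h1 : |g y - c| * Real.exp (-(y ^ 2) / 2)
              ≤ M * Real.exp (-(y ^ 2) / 2) :=
            mul_le_mul_of_nonneg_right (hleM y) (Real.exp_pos _).le
          refine h1.trans ?_
          refine mul_le_mul_of_nonneg_left ?_ hM0
          rw [← Real.exp_add]
          apply Real.exp_le_exp.mpr
          have := hsign y hy
          nlinarith
      _ = M * Real.exp (-(x ^ 2) / 2) * ∫ y in s, Real.exp (-((y - x) ^ 2) / 2) := by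
          rw [← integral_const_mul]
          congr 1; funext y; ring
      _ ≤ M * Real.exp (-(x ^ 2) / 2) * Real.sqrt (Real.pi / 2) := by
          refine mul_le_mul_of_nonneg_left hsint (by positivity)
      _ = Real.exp (-(x ^ 2) / 2) * (M * Real.sqrt (Real.pi / 2)) := by ring
  intro x
  have hfinal : |∫ y in Set.Iic x, h y|
      ≤ Real.exp (-(x ^ 2) / 2) * (M * Real.sqrt (Real.pi / 2)) := by
    rcases le_or_gt x 0 with hx | hx
    · refine key x (Set.Iic x) measurableSet_Iic ?_ ?_
      · intro y hy
        simp only [Set.mem_Iic] at hy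
        nlinarith
      · have e1 : (∫ y in Set.Iic x, Real.exp (-((y - x) ^ 2) / 2))
            = ∫ y in Set.Iic 0, Real.exp (-(y ^ 2) / 2) :=
          aux_shift_Iic (fun u => Real.exp (-(u ^ 2) / 2)) x
        rw [e1, aux_gauss_Iic]
    · have hswap : ∫ y in Set.Iic x, h y = -∫ y in Set.Ioi x, h y := by
        have := intervalIntegral.integral_Iic_add_Ioi (b := x) hhint.integrableOn hhint.integrableOn
        rw [htotal] at this
        linarith
      rw [hswap, abs_neg]
      refine key x (Set.Ioi x) measurableSet_Ioi ?_ ?_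
      · intro y hy
        simp only [Set.mem_Ioi] at hy
        nlinarith
      · have e1 : (∫ y in Set.Ioi x, Real.exp (-((y - x) ^ 2) / 2))
            = ∫ y in Set.Ioi 0, Real.exp (-(y ^ 2) / 2) :=
          aux_shift_Ioi (fun u => Real.exp (-(u ^ 2) / 2)) x
        rw [e1, aux_gauss_Ioi]
  have : |steinSol g x| = Real.exp (x ^ 2 / 2) * |∫ y in Set.Iic x, h y| := by
    rw [steinSol, abs_mul, abs_of_pos (Real.exp_pos _)]
  rw [this]
  calc Real.exp (x ^ 2 / 2) * |∫ y in Set.Iic x, h y|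
      ≤ Real.exp (x ^ 2 / 2) * (Real.exp (-(x ^ 2) / 2) * (M * Real.sqrt (Real.pi / 2))) :=
        mul_le_mul_of_nonneg_left hfinal (Real.exp_pos _).le
    _ = (Real.exp (x ^ 2 / 2) * Real.exp (-(x ^ 2) / 2)) * (M * Real.sqrt (Real.pi / 2)) := by
        ring
    _ = Real.sqrt (Real.pi / 2) * M := by
        rw [← Real.exp_add, show x ^ 2 / 2 + -(x ^ 2) / 2 = (0:ℝ) by ring,
          Real.exp_zero, one_mul, mul_comm]
end

section
/- Let g : ℝ → ℝ be continuous and bounded, and let f_g(x) = e^{x²/2} ∫_{-∞}^x (g(y) − ∫ g dγ) e^{-y²/2} dy, where γ is the standard Gaussian measure on ℝ. Then f_g is continuously differentiable and for every x ∈ ℝ, |f_g'(x)| ≤ 2 · sup_{y ∈ ℝ} |g(y) − ∫ g dγ|. -/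
open MeasureTheory ProbabilityTheory Real

section SteinAux

open Set Filter
open scoped NNReal ENNReal

private lemma stein_gexp_eq :
    (fun y : ℝ => Real.exp (-(y^2)/2)) = fun y => Real.exp (-(1/2 : ℝ) * y ^ 2) := by
  funext y; ring_nf

private lemma stein_gexp_int : Integrable (fun y : ℝ => Real.exp (-(y^2)/2)) := by
  rw [stein_gexp_eq]; exact integrable_exp_neg_mul_sq (by norm_num)

private lemma stein_ygexp_int : Integrable (fun y : ℝ => y * Real.exp (-(y^2)/2)) := by
  have := integrable_mul_exp_neg_mul_sq (b := 1/2) (by norm_num)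
  refine this.congr ?_
  filter_upwards with y
  ring_nf

private lemma stein_gexp_integral : ∫ y : ℝ, Real.exp (-(y^2)/2) = Real.sqrt (2*π) := by
  rw [stein_gexp_eq, integral_gaussian]
  norm_num [div_div_eq_mul_div, mul_comm]

private lemma stein_hd_negexp (y : ℝ) : HasDerivAt (fun y : ℝ => -Real.exp (-(y^2)/2))
    (y * Real.exp (-(y^2)/2)) y := by
  have h1 : HasDerivAt (fun y : ℝ => -(y^2)/2) (-y) y := by
    have := ((hasDerivAt_pow 2 y).neg).div_const 2
    simpa using this.congr_deriv (by ring)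
  have := (h1.exp).neg
  exact this.congr_deriv (by ring)

private lemma stein_negexp_tendsto_top :
    Tendsto (fun y : ℝ => -Real.exp (-(y^2)/2)) atTop (nhds 0) := by
  rw [show (0:ℝ) = -0 by norm_num]
  refine Tendsto.neg ?_
  refine Real.tendsto_exp_atBot.comp ?_
  apply Tendsto.atBot_div_const (by norm_num)
  exact tendsto_neg_atBot_iff.mpr (tendsto_pow_atTop (by norm_num))

private lemma stein_negexp_tendsto_bot :
    Tendsto (fun y : ℝ => -Real.exp (-(y^2)/2)) atBot (nhds 0) := by
  rw [show (0:ℝ) = -0 by norm_num]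
  refine Tendsto.neg ?_
  refine Real.tendsto_exp_atBot.comp ?_
  apply Tendsto.atBot_div_const (by norm_num)
  have : Tendsto (fun y : ℝ => y^2) atBot atTop := by
    have := (tendsto_pow_atTop (n := 2) (by norm_num)).comp tendsto_neg_atBot_atTop (α := ℝ)
    refine this.congr fun y => ?_
    simp [Function.comp]
  exact tendsto_neg_atBot_iff.mpr this

private lemma stein_ygexp_Ioi (x : ℝ) :
    ∫ y in Set.Ioi x, y * Real.exp (-(y^2)/2) = Real.exp (-(x^2)/2) := by
  have := integral_Ioi_of_hasDerivAt_of_tendsto' (a := x)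
    (fun y _ => stein_hd_negexp y) (stein_ygexp_int.integrableOn) stein_negexp_tendsto_top
  simpa using this

private lemma stein_ygexp_Iic (x : ℝ) :
    ∫ y in Set.Iic x, y * Real.exp (-(y^2)/2) = -Real.exp (-(x^2)/2) := by
  have := integral_Iic_of_hasDerivAt_of_tendsto' (a := x)
    (fun y _ => stein_hd_negexp y) (stein_ygexp_int.integrableOn) stein_negexp_tendsto_bot
  simpa using this

private lemma stein_gauss_int_repr (g : ℝ → ℝ) :
    ∫ z, g z ∂(gaussianReal 0 1)
      = (Real.sqrt (2*π))⁻¹ * ∫ x, g x * Real.exp (-(x^2)/2) := by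
  rw [gaussianReal_of_var_ne_zero _ one_ne_zero]
  have hmeas : Measurable fun x => Real.toNNReal (gaussianPDFReal 0 1 x) :=
    (measurable_gaussianPDFReal 0 1).real_toNNReal
  rw [show gaussianPDF 0 1 = fun x => ((Real.toNNReal (gaussianPDFReal 0 1 x) : ℝ≥0) : ℝ≥0∞)
    from rfl]
  rw [integral_withDensity_eq_integral_smul hmeas]
  rw [← integral_const_mul]
  congr 1; funext x
  have h0 : 0 ≤ gaussianPDFReal 0 1 x := gaussianPDFReal_nonneg 0 1 x
  rw [NNReal.smul_def, Real.coe_toNNReal _ h0]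
  simp only [smul_eq_mul, gaussianPDFReal]
  push_cast
  ring_nf

private lemma stein_integrable_g_gexp (g : ℝ → ℝ) (hg : Continuous g)
    (C : ℝ) (hC : ∀ x, |g x| ≤ C) :
    Integrable (fun y => g y * Real.exp (-(y^2)/2)) := by
  refine (stein_gexp_int.const_mul C).mono' ?_ ?_
  · exact (hg.mul (by continuity)).aestronglyMeasurable
  · filter_upwards with y
    rw [norm_mul, Real.norm_eq_abs, Real.norm_eq_abs, abs_of_pos (Real.exp_pos _)]
    exact mul_le_mul_of_nonneg_right (hC y) (Real.exp_pos _).le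

private lemma stein_key_zero (g : ℝ → ℝ) (hg : Continuous g) (C : ℝ) (hC : ∀ x, |g x| ≤ C) :
    ∫ y, (g y - ∫ z, g z ∂(gaussianReal 0 1)) * Real.exp (-(y^2)/2) = 0 := by
  set m := ∫ z, g z ∂(gaussianReal 0 1) with hm
  have hsq : Real.sqrt (2*π) ≠ 0 := by positivity
  have h1 : Integrable (fun y => g y * Real.exp (-(y^2)/2)) :=
    stein_integrable_g_gexp g hg C hC
  have h2 : Integrable (fun y => m * Real.exp (-(y^2)/2)) := stein_gexp_int.const_mul m
  have hsub : (fun y => (g y - m) * Real.exp (-(y^2)/2))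
      = fun y => g y * Real.exp (-(y^2)/2) - m * Real.exp (-(y^2)/2) := by
    funext y; ring
  rw [hsub, integral_sub h1 h2, integral_const_mul, stein_gexp_integral]
  have h3 := stein_gauss_int_repr g
  rw [← hm] at h3
  rw [show (∫ x, g x * Real.exp (-(x^2)/2)) = Real.sqrt (2*π) * m by
    rw [h3]; field_simp]
  ring

end SteinAux

/-- For continuous bounded `g`, the Stein solution `f_g` is continuously differentiable
and `|f_g'(x)| ≤ 2 · sup_y |g(y) − ∫ g dγ|` for every `x`. -/
theorem stmt_3 (g : ℝ → ℝ) (hg : Continuous g) (hgb : ∃ C, ∀ x, |g x| ≤ C) :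
    ContDiff ℝ 1 (steinSol g) ∧
      ∀ x : ℝ, |deriv (steinSol g) x|
        ≤ 2 * ⨆ y : ℝ, |g y - ∫ z, g z ∂(gaussianReal 0 1)| := by
  classical
  obtain ⟨C, hC⟩ := hgb
  set m := ∫ z, g z ∂(gaussianReal 0 1) with hm
  set h : ℝ → ℝ := fun y => g y - m with hh
  set φ : ℝ → ℝ := fun y => h y * Real.exp (-(y^2)/2) with hφ
  have hhcont : Continuous h := hg.sub continuous_const
  have hhbnd : ∀ y, |h y| ≤ C + |m| := by
    intro y
    calc |h y| = |g y - m| := rfl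
    _ ≤ |g y| + |m| := abs_sub _ _
    _ ≤ C + |m| := by gcongr; exact hC y
  have hφcont : Continuous φ := hhcont.mul (by continuity)
  have hφint : Integrable φ := stein_integrable_g_gexp h hhcont (C + |m|) hhbnd
  have hzero : ∫ y, φ y = 0 := by
    have := stein_key_zero g hg C hC
    rw [← hm] at this
    exact this
  -- the sup bound
  have hMbdd : BddAbove (Set.range fun y => |h y|) :=
    ⟨C + |m|, by rintro _ ⟨y, rfl⟩; exact hhbnd y⟩
  set M := ⨆ y : ℝ, |h y| with hM
  have hMy : ∀ y, |h y| ≤ M := fun y => le_ciSup hMbdd y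
  have hM0 : 0 ≤ M := (abs_nonneg _).trans (hMy 0)
  -- rewrite steinSol via a FTC-friendly form
  have hsum : ∀ u : ℝ, (∫ y in Set.Iic u, φ y)
      = (∫ y in Set.Iic 0, φ y) + ∫ t in (0:ℝ)..u, φ t := by
    intro u
    rw [← intervalIntegral.integral_Iic_sub_Iic hφint.integrableOn hφint.integrableOn]
    ring
  set F : ℝ → ℝ := fun u => (∫ y in Set.Iic 0, φ y) + ∫ t in (0:ℝ)..u, φ t with hF
  have hFd : ∀ x, HasDerivAt F (φ x) x := by
    intro x
    exact (intervalIntegral.integral_hasDerivAt_right hφint.intervalIntegrable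
      (hφcont.stronglyMeasurable.stronglyMeasurableAtFilter)
      hφcont.continuousAt).const_add _
  have hFIic : ∀ u : ℝ, F u = ∫ y in Set.Iic u, φ y := fun u => (hsum u).symm
  have hsSol : steinSol g = fun x => Real.exp (x^2/2) * F x := by
    funext x
    rw [steinSol, hFIic x]
  have hD : ∀ x, HasDerivAt (steinSol g)
      (x * Real.exp (x^2/2) * F x + h x) x := by
    intro x
    rw [hsSol]
    have he : HasDerivAt (fun x : ℝ => Real.exp (x^2/2)) (x * Real.exp (x^2/2)) x := by
      have h1 : HasDerivAt (fun x : ℝ => x^2/2) x x := by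
        have := (hasDerivAt_pow 2 x).div_const 2
        simpa using this.congr_deriv (by ring)
      simpa using h1.exp.congr_deriv (by ring)
    have hcancel : Real.exp (x^2/2) * φ x = h x := by
      simp only [hφ]
      rw [mul_comm (h x), ← mul_assoc, ← Real.exp_add,
        show x^2/2 + -(x^2)/2 = 0 by ring, Real.exp_zero, one_mul]
    have := he.mul (hFd x)
    refine this.congr_deriv ?_
    rw [← hcancel]
  have hderiv : deriv (steinSol g) = fun x => x * Real.exp (x^2/2) * F x + h x :=
    funext fun x => (hD x).deriv
  have hFcont : Continuous F :=
    continuous_iff_continuousAt.mpr fun x => (hFd x).continuousAt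
  constructor
  · rw [contDiff_one_iff_deriv]
    refine ⟨fun x => (hD x).differentiableAt, ?_⟩
    rw [hderiv]
    have : Continuous fun x : ℝ => Real.exp (x^2/2) :=
      Real.continuous_exp.comp ((continuous_pow 2).div_const 2)
    exact ((continuous_id.mul this).mul hFcont).add hhcont
  · intro x
    rw [hderiv]
    have key : |x * Real.exp (x^2/2) * F x| ≤ M := by
      have habs : |x * Real.exp (x^2/2) * F x| = |x| * Real.exp (x^2/2) * |F x| := by
        rw [abs_mul, abs_mul, abs_of_pos (Real.exp_pos _)]
      rw [habs]
      rcases le_or_gt x 0 with hx | hx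
      · -- left tail
        have hF1 : |F x| ≤ M * ∫ y in Set.Iic x, Real.exp (-(y^2)/2) := by
          rw [hFIic x]
          calc |∫ y in Set.Iic x, φ y| ≤ ∫ y in Set.Iic x, |φ y| := by
                simpa using
                  norm_integral_le_integral_norm (μ := volume.restrict (Set.Iic x)) φ
          _ ≤ ∫ y in Set.Iic x, M * Real.exp (-(y^2)/2) := by
                refine setIntegral_mono_on hφint.norm.integrableOn
                  ((stein_gexp_int.const_mul M).integrableOn) measurableSet_Iic
                  fun y _ => ?_
                rw [hφ, abs_mul, abs_of_pos (Real.exp_pos _)]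
                exact mul_le_mul_of_nonneg_right (hMy y) (Real.exp_pos _).le
          _ = M * ∫ y in Set.Iic x, Real.exp (-(y^2)/2) := integral_const_mul _ _
        have htail : (-x) * (∫ y in Set.Iic x, Real.exp (-(y^2)/2))
            ≤ Real.exp (-(x^2)/2) := by
          calc (-x) * (∫ y in Set.Iic x, Real.exp (-(y^2)/2))
              = ∫ y in Set.Iic x, (-x) * Real.exp (-(y^2)/2) := (integral_const_mul _ _).symm
          _ ≤ ∫ y in Set.Iic x, (-y) * Real.exp (-(y^2)/2) := by
              refine setIntegral_mono_on ((stein_gexp_int.const_mul (-x)).integrableOn)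
                ((stein_ygexp_int.neg.congr (by filter_upwards with y; simp [neg_mul])).integrableOn)
                measurableSet_Iic fun y hy => ?_
              exact mul_le_mul_of_nonneg_right (by simp at hy ⊢; linarith) (Real.exp_pos _).le
          _ = -∫ y in Set.Iic x, y * Real.exp (-(y^2)/2) := by
              rw [← integral_neg]; congr 1; funext y; ring
          _ = Real.exp (-(x^2)/2) := by rw [stein_ygexp_Iic, neg_neg]
        have hIicpos : 0 ≤ ∫ y in Set.Iic x, Real.exp (-(y^2)/2) :=
          setIntegral_nonneg measurableSet_Iic fun y _ => (Real.exp_pos _).le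
        calc |x| * Real.exp (x^2/2) * |F x|
            ≤ |x| * Real.exp (x^2/2) * (M * ∫ y in Set.Iic x, Real.exp (-(y^2)/2)) := by
              gcongr
        _ = M * (Real.exp (x^2/2) * ((-x) * ∫ y in Set.Iic x, Real.exp (-(y^2)/2))) := by
              rw [abs_of_nonpos hx]; ring
        _ ≤ M * (Real.exp (x^2/2) * Real.exp (-(x^2)/2)) := by
              gcongr
        _ = M := by
              rw [← Real.exp_add, show x^2/2 + -(x^2)/2 = 0 by ring, Real.exp_zero, mul_one]
      · -- right tail
        have hFneg : F x = -∫ y in Set.Ioi x, φ y := by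
          have := intervalIntegral.integral_Iic_add_Ioi (b := x)
            hφint.integrableOn hφint.integrableOn
          rw [hzero] at this
          rw [hFIic x]; linarith
        have hF1 : |F x| ≤ M * ∫ y in Set.Ioi x, Real.exp (-(y^2)/2) := by
          rw [hFneg, abs_neg]
          calc |∫ y in Set.Ioi x, φ y| ≤ ∫ y in Set.Ioi x, |φ y| := by
                simpa using
                  norm_integral_le_integral_norm (μ := volume.restrict (Set.Ioi x)) φ
          _ ≤ ∫ y in Set.Ioi x, M * Real.exp (-(y^2)/2) := by
                refine setIntegral_mono_on hφint.norm.integrableOn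
                  ((stein_gexp_int.const_mul M).integrableOn) measurableSet_Ioi
                  fun y _ => ?_
                rw [hφ, abs_mul, abs_of_pos (Real.exp_pos _)]
                exact mul_le_mul_of_nonneg_right (hMy y) (Real.exp_pos _).le
          _ = M * ∫ y in Set.Ioi x, Real.exp (-(y^2)/2) := integral_const_mul _ _
        have htail : x * (∫ y in Set.Ioi x, Real.exp (-(y^2)/2))
            ≤ Real.exp (-(x^2)/2) := by
          calc x * (∫ y in Set.Ioi x, Real.exp (-(y^2)/2))
              = ∫ y in Set.Ioi x, x * Real.exp (-(y^2)/2) := (integral_const_mul _ _).symm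
          _ ≤ ∫ y in Set.Ioi x, y * Real.exp (-(y^2)/2) := by
              refine setIntegral_mono_on ((stein_gexp_int.const_mul x).integrableOn)
                (stein_ygexp_int.integrableOn) measurableSet_Ioi fun y hy => ?_
              exact mul_le_mul_of_nonneg_right (by simp at hy ⊢; linarith) (Real.exp_pos _).le
          _ = Real.exp (-(x^2)/2) := stein_ygexp_Ioi x
        calc |x| * Real.exp (x^2/2) * |F x|
            ≤ |x| * Real.exp (x^2/2) * (M * ∫ y in Set.Ioi x, Real.exp (-(y^2)/2)) := by
              gcongr
        _ = M * (Real.exp (x^2/2) * (x * ∫ y in Set.Ioi x, Real.exp (-(y^2)/2))) := by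
              rw [abs_of_pos hx]; ring
        _ ≤ M * (Real.exp (x^2/2) * Real.exp (-(x^2)/2)) := by
              gcongr
        _ = M := by
              rw [← Real.exp_add, show x^2/2 + -(x^2)/2 = 0 by ring, Real.exp_zero, mul_one]
    calc |x * Real.exp (x^2/2) * F x + h x|
        ≤ |x * Real.exp (x^2/2) * F x| + |h x| := abs_add_le _ _
    _ ≤ M + M := add_le_add key (hMy x)
    _ = 2 * M := by ring
end

section
/- Let μ and ν be Borel probability measures on ℝ. Then sup over Borel sets A ⊆ ℝ of |μ(A) − ν(A)| equals one half of the supremum of |∫ g dμ − ∫ g dν| taken over all continuously differentiable functions g : ℝ → ℝ with compact support satisfying |g(x)| ≤ 1 for all x ∈ ℝ. -/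
open MeasureTheory Set
open scoped Manifold

set_option maxHeartbeats 1000000

/-- The total variation distance `sup_A |μ(A) − ν(A)|` between two Borel probability
measures on `ℝ` equals one half of the supremum of `|∫ g dμ − ∫ g dν|` over all
continuously differentiable `g : ℝ → ℝ` with compact support and `|g| ≤ 1`. -/
theorem stmt_5 (μ ν : Measure ℝ) [IsProbabilityMeasure μ] [IsProbabilityMeasure ν] :
    sSup {r : ℝ | ∃ A : Set ℝ, MeasurableSet A ∧ r = |(μ A).toReal - (ν A).toReal|}
      = (1 / 2) * sSup {r : ℝ | ∃ g : ℝ → ℝ, ContDiff ℝ 1 g ∧ HasCompactSupport g ∧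
          (∀ x : ℝ, |g x| ≤ 1) ∧ r = |(∫ x, g x ∂μ) - ∫ x, g x ∂ν|} := by
  classical
  -- Hahn decomposition for the signed measure μ - ν
  obtain ⟨D, hD, hDpos, hDneg⟩ :=
    (μ.toSignedMeasure - ν.toSignedMeasure).exists_compl_positive_negative
  have key1 : ∀ j : Set ℝ, MeasurableSet j → j ⊆ D → ν j ≤ μ j := by
    intro j hj hjD
    have h := (VectorMeasure.restrict_le_restrict_iff _ _ hD).1 hDpos hj hjD
    rw [VectorMeasure.zero_apply, Measure.toSignedMeasure_sub_apply hj] at h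
    have h2 := sub_nonneg.1 h
    rwa [measureReal_def, measureReal_def, ENNReal.toReal_le_toReal (measure_ne_top ν j) (measure_ne_top μ j)] at h2
  have key2 : ∀ j : Set ℝ, MeasurableSet j → j ⊆ Dᶜ → μ j ≤ ν j := by
    intro j hj hjD
    have h := (VectorMeasure.restrict_le_restrict_iff _ _ hD.compl).1 hDneg hj hjD
    rw [VectorMeasure.zero_apply, Measure.toSignedMeasure_sub_apply hj] at h
    have h2 := sub_nonpos.1 h
    rwa [measureReal_def, measureReal_def, ENNReal.toReal_le_toReal (measure_ne_top μ j) (measure_ne_top ν j)] at h2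
  set a := (μ D).toReal with ha
  set b := (ν D).toReal with hb
  have hba : b ≤ a := ENNReal.toReal_mono (measure_ne_top μ D) (key1 D hD subset_rfl)
  have hμc : (μ Dᶜ).toReal = 1 - a := by
    rw [prob_compl_eq_one_sub hD, ENNReal.toReal_sub_of_le prob_le_one ENNReal.one_ne_top,
      ENNReal.toReal_one]
  have hνc : (ν Dᶜ).toReal = 1 - b := by
    rw [prob_compl_eq_one_sub hD, ENNReal.toReal_sub_of_le prob_le_one ENNReal.one_ne_top,
      ENNReal.toReal_one]
  -- splitting a measure over a measurable set, in real numbers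
  have split : ∀ κ : Measure ℝ, (∀ s : Set ℝ, κ s ≠ ⊤) → ∀ A B : Set ℝ, MeasurableSet B →
      (κ A).toReal = (κ (A ∩ B)).toReal + (κ (A \ B)).toReal := by
    intro κ hκ A B hB
    rw [← ENNReal.toReal_add (hκ _) (hκ _), measure_inter_add_diff A hB]
  have rmono : ∀ (κ : Measure ℝ) (_ : ∀ s : Set ℝ, κ s ≠ ⊤) (s t : Set ℝ), s ⊆ t →
      (κ s).toReal ≤ (κ t).toReal := fun κ hκ s t hst =>
    ENNReal.toReal_mono (hκ t) (measure_mono hst)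
  -- every set gives variation at most a - b
  have hAbs : ∀ A : Set ℝ, MeasurableSet A → |(μ A).toReal - (ν A).toReal| ≤ a - b := by
    intro A hA
    have h1 := split μ (measure_ne_top μ) A D hD
    have h2 := split ν (measure_ne_top ν) A D hD
    have h3 := split μ (measure_ne_top μ) D A hA
    have h4 := split ν (measure_ne_top ν) D A hA
    have h5 := split μ (measure_ne_top μ) Dᶜ A hA
    have h6 := split ν (measure_ne_top ν) Dᶜ A hA
    rw [inter_comm D A] at h3 h4
    rw [inter_comm Dᶜ A, ← diff_eq] at h5 h6
    have e1 : (μ (A \ D)).toReal ≤ (ν (A \ D)).toReal :=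
      ENNReal.toReal_mono (measure_ne_top ν _)
        (key2 _ (hA.diff hD) fun x hx => hx.2)
    have e2 : (ν (D \ A)).toReal ≤ (μ (D \ A)).toReal :=
      ENNReal.toReal_mono (measure_ne_top μ _) (key1 _ (hD.diff hA) diff_subset)
    have e3 : (ν (A ∩ D)).toReal ≤ (μ (A ∩ D)).toReal :=
      ENNReal.toReal_mono (measure_ne_top μ _) (key1 _ (hA.inter hD) inter_subset_right)
    have e4 : (μ (Dᶜ \ A)).toReal ≤ (ν (Dᶜ \ A)).toReal :=
      ENNReal.toReal_mono (measure_ne_top ν _) (key2 _ (hD.compl.diff hA) diff_subset)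
    rw [abs_le]
    constructor
    · -- -(a-b) ≤ μA - νA, i.e. νA - μA ≤ a - b
      have := hμc; have := hνc
      nlinarith [h1, h2, h5, h6, e1, e3, e4]
    · nlinarith [h1, h2, h3, h4, e1, e2]
  -- the first supremum equals a - b
  have hS1 : sSup {r : ℝ | ∃ A : Set ℝ, MeasurableSet A ∧
      r = |(μ A).toReal - (ν A).toReal|} = a - b := by
    apply IsGreatest.csSup_eq
    constructor
    · exact ⟨D, hD, (abs_of_nonneg (by linarith)).symm⟩
    · rintro r ⟨A, hA, rfl⟩; exact hAbs A hA
  -- upper bound for integrals against C¹ bounded functions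
  have hIb : ∀ g : ℝ → ℝ, Continuous g → HasCompactSupport g → (∀ x, |g x| ≤ 1) →
      (∫ x, g x ∂μ) - ∫ x, g x ∂ν ≤ 2 * (a - b) := by
    intro g hgc hgs hg1
    have hle : ν.restrict D ≤ μ.restrict D := by
      rw [Measure.le_iff]
      intro s hs
      rw [Measure.restrict_apply hs, Measure.restrict_apply hs]
      exact key1 _ (hs.inter hD) inter_subset_right
    have hle' : μ.restrict Dᶜ ≤ ν.restrict Dᶜ := by
      rw [Measure.le_iff]
      intro s hs
      rw [Measure.restrict_apply hs, Measure.restrict_apply hs]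
      exact key2 _ (hs.inter hD.compl) inter_subset_right
    have hint : ∀ (κ : Measure ℝ) [IsFiniteMeasure κ], Integrable g κ := fun κ _ =>
      hgc.integrable_of_hasCompactSupport hgs
    set ρ := μ.restrict D - ν.restrict D with hρdef
    set ρ' := ν.restrict Dᶜ - μ.restrict Dᶜ with hρ'def
    have hμsplit : ∫ x, g x ∂μ = (∫ x, g x ∂(μ.restrict D)) + ∫ x, g x ∂(μ.restrict Dᶜ) := by
      rw [← integral_add_measure (hint _) (hint _), Measure.restrict_add_restrict_compl hD]
    have hνsplit : ∫ x, g x ∂ν = (∫ x, g x ∂(ν.restrict D)) + ∫ x, g x ∂(ν.restrict Dᶜ) := by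
      rw [← integral_add_measure (hint _) (hint _), Measure.restrict_add_restrict_compl hD]
    have hρ : μ.restrict D = ρ + ν.restrict D := (Measure.sub_add_cancel_of_le hle).symm
    have hρ' : ν.restrict Dᶜ = ρ' + μ.restrict Dᶜ := (Measure.sub_add_cancel_of_le hle').symm
    have h1 : ∫ x, g x ∂(μ.restrict D) = (∫ x, g x ∂ρ) + ∫ x, g x ∂(ν.restrict D) := by
      rw [hρ, integral_add_measure (hint _) (hint _)]
    have h2 : ∫ x, g x ∂(ν.restrict Dᶜ) = (∫ x, g x ∂ρ') + ∫ x, g x ∂(μ.restrict Dᶜ) := by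
      rw [hρ', integral_add_measure (hint _) (hint _)]
    have hρu : (ρ univ).toReal = a - b := by
      have : ρ univ = μ D - ν D := by
        rw [hρdef, Measure.sub_apply MeasurableSet.univ hle, Measure.restrict_apply_univ,
          Measure.restrict_apply_univ]
      rw [this, ENNReal.toReal_sub_of_le (key1 D hD subset_rfl) (measure_ne_top μ D)]
    have hρ'u : (ρ' univ).toReal = a - b := by
      have : ρ' univ = ν Dᶜ - μ Dᶜ := by
        rw [hρ'def, Measure.sub_apply MeasurableSet.univ hle', Measure.restrict_apply_univ,
          Measure.restrict_apply_univ]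
      rw [this, ENNReal.toReal_sub_of_le (key2 Dᶜ hD.compl subset_rfl) (measure_ne_top ν _),
        hμc, hνc]
      ring
    have hbρ : |∫ x, g x ∂ρ| ≤ (ρ univ).toReal := by
      have := norm_integral_le_of_norm_le_const (μ := ρ) (f := g) (C := 1)
        (Filter.Eventually.of_forall fun x => by simpa using hg1 x)
      simpa [measureReal_def] using this
    have hbρ' : |∫ x, g x ∂ρ'| ≤ (ρ' univ).toReal := by
      have := norm_integral_le_of_norm_le_const (μ := ρ') (f := g) (C := 1)
        (Filter.Eventually.of_forall fun x => by simpa using hg1 x)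
      simpa [measureReal_def] using this
    rw [hρu] at hbρ
    rw [hρ'u] at hbρ'
    have l1 : (∫ x, g x ∂ρ) ≤ a - b := le_trans (le_abs_self _) hbρ
    have l2 : -(a - b) ≤ ∫ x, g x ∂ρ' := by
      have := neg_abs_le (∫ x, g x ∂ρ')
      linarith
    linarith [hμsplit, hνsplit, h1, h2]
  -- membership of 0 in the second set
  have h0mem : (0 : ℝ) ∈ {r : ℝ | ∃ g : ℝ → ℝ, ContDiff ℝ 1 g ∧ HasCompactSupport g ∧
      (∀ x : ℝ, |g x| ≤ 1) ∧ r = |(∫ x, g x ∂μ) - ∫ x, g x ∂ν|} := by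
    refine ⟨fun _ => 0, contDiff_const, ?_, fun x => by simp, by simp⟩
    exact HasCompactSupport.intro (isCompact_singleton (x := (0:ℝ))) fun x _ => rfl
  -- upper bound for the second set
  have hub : ∀ r ∈ {r : ℝ | ∃ g : ℝ → ℝ, ContDiff ℝ 1 g ∧ HasCompactSupport g ∧
      (∀ x : ℝ, |g x| ≤ 1) ∧ r = |(∫ x, g x ∂μ) - ∫ x, g x ∂ν|}, r ≤ 2 * (a - b) := by
    rintro r ⟨g, hg1, hg2, hg3, rfl⟩
    rw [abs_le]
    constructor
    · have hnegS : HasCompactSupport fun x => -g x := by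
        simpa [Pi.neg_def] using hg2.neg
      have hneg := hIb (fun x => -g x) hg1.continuous.neg hnegS
        (fun x => by simpa using hg3 x)
      rw [integral_neg, integral_neg] at hneg
      linarith
    · exact hIb g hg1.continuous hg2 hg3
  -- lower bound: 2*(a-b) ≤ sSup of the second set
  have hlb : 2 * (a - b) ≤ sSup {r : ℝ | ∃ g : ℝ → ℝ, ContDiff ℝ 1 g ∧ HasCompactSupport g ∧
      (∀ x : ℝ, |g x| ≤ 1) ∧ r = |(∫ x, g x ∂μ) - ∫ x, g x ∂ν|} := by
    have hbdd : BddAbove {r : ℝ | ∃ g : ℝ → ℝ, ContDiff ℝ 1 g ∧ HasCompactSupport g ∧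
        (∀ x : ℝ, |g x| ≤ 1) ∧ r = |(∫ x, g x ∂μ) - ∫ x, g x ∂ν|} := ⟨2 * (a - b), hub⟩
    refine le_of_forall_pos_le_add fun ε hε => ?_
    suffices h : ∃ r ∈ {r : ℝ | ∃ g : ℝ → ℝ, ContDiff ℝ 1 g ∧ HasCompactSupport g ∧
        (∀ x : ℝ, |g x| ≤ 1) ∧ r = |(∫ x, g x ∂μ) - ∫ x, g x ∂ν|}, 2 * (a - b) - ε ≤ r by
      obtain ⟨r, hr, hr2⟩ := h
      have := le_csSup hbdd hr
      linarith
    set π := μ + ν with hπ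
    set δ : ENNReal := ENNReal.ofReal (ε / 8) with hδ
    have hδ0 : δ ≠ 0 := by
      rw [hδ, Ne, ENNReal.ofReal_eq_zero, not_le]
      linarith
    have hδtop : δ ≠ ⊤ := ENNReal.ofReal_ne_top
    have hδreal : δ.toReal = ε / 8 := ENNReal.toReal_ofReal (by linarith)
    have hπle : ∀ (κ : Measure ℝ), κ ≤ π → ∀ s : Set ℝ, π s < δ → (κ s).toReal ≤ ε / 8 := by
      intro κ hκ s hs
      have h1 : κ s ≤ δ := le_trans (Measure.le_iff'.1 hκ s) (le_of_lt hs)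
      calc (κ s).toReal ≤ δ.toReal := ENNReal.toReal_mono hδtop h1
        _ = ε / 8 := hδreal
    have hμπ : μ ≤ π := Measure.le_add_right le_rfl
    have hνπ : ν ≤ π := Measure.le_add_left le_rfl
    obtain ⟨K, hKD, hKc, hKm⟩ :=
      MeasurableSet.exists_isCompact_diff_lt (μ := π) hD (measure_ne_top π D) hδ0
    obtain ⟨K', hK'D, hK'c, hK'm⟩ :=
      MeasurableSet.exists_isCompact_diff_lt (μ := π) hD.compl (measure_ne_top π Dᶜ) hδ0
    obtain ⟨V, hDV, hVo, hVm⟩ :=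
      MeasurableSet.exists_isOpen_diff_lt (μ := π) hD (measure_ne_top π D) hδ0
    obtain ⟨V', hD'V, hV'o, hV'm⟩ :=
      MeasurableSet.exists_isOpen_diff_lt (μ := π) hD.compl (measure_ne_top π Dᶜ) hδ0
    set U := V ∩ K'ᶜ ∩ Metric.thickening 1 K with hU
    have hUo : IsOpen U := (hVo.inter hK'c.isClosed.isOpen_compl).inter Metric.isOpen_thickening
    have hKU : K ⊆ U := fun x hx =>
      ⟨⟨hDV (hKD hx), fun hx' => (hK'D hx') (hKD hx)⟩,
        Metric.self_subset_thickening one_pos _ hx⟩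
    have hUV : U ⊆ V := fun x hx => hx.1.1
    have hUb : Bornology.IsBounded U :=
      (hKc.isBounded.thickening (δ := 1)).subset inter_subset_right
    set U' := V' ∩ Kᶜ ∩ Metric.thickening 1 K' with hU'
    have hU'o : IsOpen U' := (hV'o.inter hKc.isClosed.isOpen_compl).inter Metric.isOpen_thickening
    have hK'U' : K' ⊆ U' := fun x hx =>
      ⟨⟨hD'V (hK'D hx), fun hx' => (hK'D hx) (hKD hx')⟩,
        Metric.self_subset_thickening one_pos _ hx⟩
    have hU'V' : U' ⊆ V' := fun x hx => hx.1.1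
    have hU'b : Bornology.IsBounded U' :=
      (hK'c.isBounded.thickening (δ := 1)).subset inter_subset_right
    -- smooth Urysohn functions
    obtain ⟨u, hu0, hu1, hu01⟩ := exists_contMDiffMap_zero_one_of_isClosed (n := ⊤) (𝓘(ℝ, ℝ))
      (isClosed_compl_iff.2 hUo) hKc.isClosed
      (disjoint_left.2 fun x hxU hxK => hxU (hKU hxK))
    obtain ⟨v, hv0, hv1, hv01⟩ := exists_contMDiffMap_zero_one_of_isClosed (n := ⊤) (𝓘(ℝ, ℝ))
      (isClosed_compl_iff.2 hU'o) hK'c.isClosed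
      (disjoint_left.2 fun x hxU hxK => hxU (hK'U' hxK))
    have hufC : ContDiff ℝ (⊤ : ℕ∞) u := contMDiff_iff_contDiff.1 u.contMDiff
    have hvfC : ContDiff ℝ (⊤ : ℕ∞) v := contMDiff_iff_contDiff.1 v.contMDiff
    have huzero : ∀ x ∉ U, u x = 0 := fun x hx => by simpa using hu0 hx
    have hvzero : ∀ x ∉ U', v x = 0 := fun x hx => by simpa using hv0 hx
    have huS : HasCompactSupport (u : ℝ → ℝ) :=
      HasCompactSupport.intro hUb.isCompact_closure fun x hx =>
        huzero x fun hxU => hx (subset_closure hxU)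
    have hvS : HasCompactSupport (v : ℝ → ℝ) :=
      HasCompactSupport.intro hU'b.isCompact_closure fun x hx =>
        hvzero x fun hxU => hx (subset_closure hxU)
    have huint : ∀ (κ : Measure ℝ) [IsFiniteMeasure κ], Integrable (u : ℝ → ℝ) κ := fun κ _ =>
      hufC.continuous.integrable_of_hasCompactSupport huS
    have hvint : ∀ (κ : Measure ℝ) [IsFiniteMeasure κ], Integrable (v : ℝ → ℝ) κ := fun κ _ =>
      hvfC.continuous.integrable_of_hasCompactSupport hvS
    -- measure estimates
    have f1 : a - ε / 8 ≤ (μ K).toReal := by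
      have h := split μ (measure_ne_top μ) D K hKc.measurableSet
      rw [inter_eq_self_of_subset_right hKD] at h
      have h2 : (μ (D \ K)).toReal ≤ ε / 8 := hπle μ hμπ _ hKm
      linarith
    have f2 : (ν U).toReal ≤ b + ε / 8 := by
      have h := split ν (measure_ne_top ν) V D hD
      have hm : (ν U).toReal ≤ (ν V).toReal := rmono ν (measure_ne_top ν) _ _ hUV
      have h2 : (ν (V ∩ D)).toReal ≤ b :=
        rmono ν (measure_ne_top ν) _ _ inter_subset_right
      have h3 : (ν (V \ D)).toReal ≤ ε / 8 := hπle ν hνπ _ hVm.2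
      linarith
    have f3 : (1 - b) - ε / 8 ≤ (ν K').toReal := by
      have h := split ν (measure_ne_top ν) Dᶜ K' hK'c.measurableSet
      rw [inter_eq_self_of_subset_right hK'D] at h
      have h2 : (ν (Dᶜ \ K')).toReal ≤ ε / 8 := hπle ν hνπ _ hK'm
      rw [hνc] at h
      linarith
    have f4 : (μ U').toReal ≤ (1 - a) + ε / 8 := by
      have h := split μ (measure_ne_top μ) V' Dᶜ hD.compl
      have hm : (μ U').toReal ≤ (μ V').toReal := rmono μ (measure_ne_top μ) _ _ hU'V'
      have h2 : (μ (V' ∩ Dᶜ)).toReal ≤ (μ Dᶜ).toReal :=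
        rmono μ (measure_ne_top μ) _ _ inter_subset_right
      have h3 : (μ (V' \ Dᶜ)).toReal ≤ ε / 8 := hπle μ hμπ _ hV'm.2
      rw [hμc] at h2
      linarith
    -- integral estimates
    have iu1 : (μ K).toReal ≤ ∫ x, u x ∂μ := by
      have hmono : ∀ x, K.indicator (1 : ℝ → ℝ) x ≤ u x := by
        intro x
        by_cases hx : x ∈ K
        · rw [indicator_of_mem hx, Pi.one_apply]
          exact le_of_eq (by simpa using (hu1 hx).symm)
        · rw [indicator_of_notMem hx]
          exact (hu01 x).1
      have h := integral_mono ((integrable_const (1:ℝ)).indicator hKc.measurableSet)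
        (huint μ) hmono
      exact le_trans (le_of_eq (integral_indicator_one hKc.measurableSet).symm) h
    have iu2 : (∫ x, u x ∂ν) ≤ (ν U).toReal := by
      have hmono : ∀ x, u x ≤ U.indicator (1 : ℝ → ℝ) x := by
        intro x
        by_cases hx : x ∈ U
        · rw [indicator_of_mem hx, Pi.one_apply]; exact (hu01 x).2
        · rw [indicator_of_notMem hx, huzero x hx]
      have h := integral_mono (huint ν)
        ((integrable_const (1:ℝ)).indicator hUo.measurableSet) hmono
      exact le_trans h (le_of_eq (integral_indicator_one hUo.measurableSet))
    have iv1 : (ν K').toReal ≤ ∫ x, v x ∂ν := by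
      have hmono : ∀ x, K'.indicator (1 : ℝ → ℝ) x ≤ v x := by
        intro x
        by_cases hx : x ∈ K'
        · rw [indicator_of_mem hx, Pi.one_apply]
          exact le_of_eq (by simpa using (hv1 hx).symm)
        · rw [indicator_of_notMem hx]
          exact (hv01 x).1
      have h := integral_mono ((integrable_const (1:ℝ)).indicator hK'c.measurableSet)
        (hvint ν) hmono
      exact le_trans (le_of_eq (integral_indicator_one hK'c.measurableSet).symm) h
    have iv2 : (∫ x, v x ∂μ) ≤ (μ U').toReal := by
      have hmono : ∀ x, v x ≤ U'.indicator (1 : ℝ → ℝ) x := by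
        intro x
        by_cases hx : x ∈ U'
        · rw [indicator_of_mem hx, Pi.one_apply]; exact (hv01 x).2
        · rw [indicator_of_notMem hx, hvzero x hx]
      have h := integral_mono (hvint μ)
        ((integrable_const (1:ℝ)).indicator hU'o.measurableSet) hmono
      exact le_trans h (le_of_eq (integral_indicator_one hU'o.measurableSet))
    -- the test function
    set g : ℝ → ℝ := fun x => u x - v x with hg
    have hgC : ContDiff ℝ 1 g := (hufC.sub hvfC).of_le (by exact_mod_cast le_top)
    have hgS : HasCompactSupport g := by
      apply HasCompactSupport.intro (huS.union hvS)
      intro x hx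
      have h1 : u x = 0 := by
        by_contra h
        exact hx (Or.inl (subset_closure h))
      have h2 : v x = 0 := by
        by_contra h
        exact hx (Or.inr (subset_closure h))
      simp [hg, h1, h2]
    have hgB : ∀ x : ℝ, |g x| ≤ 1 := by
      intro x
      rw [abs_le]
      constructor
      · have := (hu01 x).1; have := (hv01 x).2; simp only [hg]; linarith
      · have := (hu01 x).2; have := (hv01 x).1; simp only [hg]; linarith
    have hgμ : ∫ x, g x ∂μ = (∫ x, u x ∂μ) - ∫ x, v x ∂μ := integral_sub (huint μ) (hvint μ)
    have hgν : ∫ x, g x ∂ν = (∫ x, u x ∂ν) - ∫ x, v x ∂ν := integral_sub (huint ν) (hvint ν)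
    refine ⟨|(∫ x, g x ∂μ) - ∫ x, g x ∂ν|, ⟨g, hgC, hgS, hgB, rfl⟩, ?_⟩
    have hIge : 2 * (a - b) - ε ≤ (∫ x, g x ∂μ) - ∫ x, g x ∂ν := by
      rw [hgμ, hgν]
      linarith
    exact le_trans hIge (le_abs_self _)
  -- combine
  rw [hS1]
  have hS2 : sSup {r : ℝ | ∃ g : ℝ → ℝ, ContDiff ℝ 1 g ∧ HasCompactSupport g ∧
      (∀ x : ℝ, |g x| ≤ 1) ∧ r = |(∫ x, g x ∂μ) - ∫ x, g x ∂ν|} = 2 * (a - b) :=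
    le_antisymm (csSup_le ⟨0, h0mem⟩ hub) hlb
  rw [hS2]
  ring
end
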